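/- Let Y_1, ..., Y_n be random variables taking values in partially ordered sets which form a Markov chain (Y_1,...,Y_{k-1} independent of Y_{k+1},...,Y_n given Y_k for each k). Suppose for each k, Y_{k+1} is either stochastically increasing or stochastically decreasing in Y_k. Then Y_n is stochastically increasing in Y_1 if the number of indices k for which Y_{k+1} is stochastically decreasing in Y_k is even, and stochastically decreasing in Y_1 if that number is odd. -/
import Mathlib


open Finset

/-- Marginal distribution of the `i`-th coordinate. -/
def marg {n : ℕ} {α : Fin (n+1) → Type*} [∀ i, Fintype (α i)] [∀ i, DecidableEq (α i)]
    (p : (∀ i, α i) → ℝ) (i : Fin (n+1)) (a : α i) : ℝ :=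
  ∑ ω ∈ univ.filter (fun ω => ω i = a), p ω

/-- Joint marginal of the `i`-th and `j`-th coordinates. -/
def marg2 {n : ℕ} {α : Fin (n+1) → Type*} [∀ i, Fintype (α i)] [∀ i, DecidableEq (α i)]
    (p : (∀ i, α i) → ℝ) (i j : Fin (n+1)) (a : α i) (b : α j) : ℝ :=
  ∑ ω ∈ univ.filter (fun ω => ω i = a ∧ ω j = b), p ω

/-- Conditional law of the `j`-th coordinate given that the `i`-th coordinate equals `a`. -/
noncomputable def condLaw {n : ℕ} {α : Fin (n+1) → Type*} [∀ i, Fintype (α i)] [∀ i, DecidableEq (α i)]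
    (p : (∀ i, α i) → ℝ) (i j : Fin (n+1)) (a : α i) : α j → ℝ :=
  fun b => marg2 p i j a b / marg p i a

/-- `u` stochastically dominates `v` on a finite poset: every upwardly closed set gets at
least as much mass under `u` as under `v`. -/
def StochDom {β : Type*} [Fintype β] [PartialOrder β] (u v : β → ℝ) : Prop :=
  ∀ A : Finset β, (∀ x ∈ A, ∀ y, x ≤ y → y ∈ A) → ∑ x ∈ A, v x ≤ ∑ x ∈ A, u x

lemma exp_mono {β : Type*} [Fintype β] [PartialOrder β] (u v : β → ℝ)
    (hsum : ∑ b, u b = ∑ b, v b) (hdom : StochDom u v)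
    (f : β → ℝ) (hf : Monotone f) :
    ∑ b, v b * f b ≤ ∑ b, u b * f b := by
  classical
  have key : ∀ (m : ℕ) (f : β → ℝ), Monotone f → (univ.image f).card ≤ m →
      ∑ b, v b * f b ≤ ∑ b, u b * f b := by
    intro m
    induction m with
    | zero =>
      intro f hf hc
      have : (univ : Finset β) = ∅ := by
        by_contra h
        have hne : (univ : Finset β).Nonempty := nonempty_iff_ne_empty.mpr h
        have := (hne.image f).card_pos
        omega
      simp [this]
    | succ m ih =>
      intro f hf hc
      rcases eq_or_ne (univ : Finset β) ∅ with h | h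
      · simp [h]
      have hne : (univ : Finset β).Nonempty := nonempty_iff_ne_empty.mpr h
      set s := univ.image f with hs
      have hsne : s.Nonempty := hne.image f
      rcases le_or_gt s.card 1 with h1 | h1
      · obtain ⟨c, hcs⟩ := Finset.card_le_one_iff_subset_singleton.mp h1
        have hconst : ∀ b, f b = c := by
          intro b
          have : f b ∈ s := mem_image_of_mem f (mem_univ b)
          simpa using hcs this
        simp only [hconst]
        rw [← Finset.sum_mul, ← Finset.sum_mul, hsum]
      · set M := s.max' hsne with hM
        have hsM : M ∈ s := s.max'_mem hsne
        have hs'ne : (s.erase M).Nonempty := by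
          rw [← Finset.card_pos, Finset.card_erase_of_mem hsM]; omega
        set M' := (s.erase M).max' hs'ne with hM'
        have hM's : M' ∈ s.erase M := (s.erase M).max'_mem hs'ne
        have hM'M : M' < M :=
          lt_of_le_of_ne (s.le_max' M' (Finset.mem_of_mem_erase hM's))
            (Finset.ne_of_mem_erase hM's)
        set g : β → ℝ := fun b => min (f b) M' with hg
        have hgmono : Monotone g := fun x y hxy => min_le_min (hf hxy) le_rfl
        have hfle : ∀ b, f b ≤ M := fun b => s.le_max' _ (mem_image_of_mem f (mem_univ b))
        have hfcase : ∀ b, f b = M ∨ f b ≤ M' := by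
          intro b
          rcases eq_or_ne (f b) M with h' | h'
          · exact Or.inl h'
          · exact Or.inr ((s.erase M).le_max' _
              (Finset.mem_erase.mpr ⟨h', mem_image_of_mem f (mem_univ b)⟩))
        have hgval : ∀ b, g b = if M ≤ f b then M' else f b := by
          intro b
          rcases hfcase b with h' | h'
          · rw [if_pos (h' ▸ le_rfl), hg]; simp [h', le_of_lt hM'M]
          · rw [if_neg (by rw [not_le]; exact lt_of_le_of_lt h' hM'M), hg]
            simp [h']
        have hgcard : (univ.image g).card ≤ m := by
          have hsub : univ.image g ⊆ s.erase M := by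
            intro x hx
            obtain ⟨b, _, hb⟩ := Finset.mem_image.mp hx
            rw [hgval b] at hb
            rcases hfcase b with h' | h'
            · rw [if_pos (h' ▸ le_rfl)] at hb; exact hb ▸ hM's
            · have : ¬ M ≤ f b := by rw [not_le]; exact lt_of_le_of_lt h' hM'M
              rw [if_neg this] at hb
              exact hb ▸ Finset.mem_erase.mpr
                ⟨fun hEq => absurd (hEq ▸ h') (not_le.mpr hM'M),
                  mem_image_of_mem f (mem_univ b)⟩
          calc (univ.image g).card ≤ (s.erase M).card := Finset.card_le_card hsub
            _ = s.card - 1 := Finset.card_erase_of_mem hsM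
            _ ≤ m := by omega
        have ihg := ih g hgmono hgcard
        set A : Finset β := univ.filter (fun b => M ≤ f b) with hA
        have hAup : ∀ x ∈ A, ∀ y, x ≤ y → y ∈ A := by
          intro x hx y hxy
          simp only [hA, Finset.mem_filter, Finset.mem_univ, true_and] at hx ⊢
          exact le_trans hx (hf hxy)
        have hdomA := hdom A hAup
        have expand : ∀ w : β → ℝ, ∑ b, w b * f b
            = (∑ b, w b * g b) + (M - M') * ∑ b ∈ A, w b := by
          intro w
          have : ∀ b, w b * f b = w b * g b + (M - M') * (if M ≤ f b then w b else 0) := by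
            intro b
            rcases le_or_gt M (f b) with h' | h'
            · have hfb : f b = M := le_antisymm (hfle b) h'
              have hgb : g b = M' := by rw [hgval b, if_pos h']
              rw [if_pos h', hfb, hgb]; ring
            · have hgb : g b = f b := by rw [hgval b, if_neg (not_le.mpr h')]
              rw [if_neg (not_le.mpr h'), hgb]; ring
          rw [Finset.sum_congr rfl (fun b _ => this b), Finset.sum_add_distrib,
            ← Finset.mul_sum, hA, Finset.sum_filter]
        rw [expand u, expand v]
        have hMM' : 0 ≤ M - M' := by linarith
        nlinarith [mul_le_mul_of_nonneg_left hdomA hMM']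
  exact key _ f hf le_rfl

lemma exp_anti {β : Type*} [Fintype β] [PartialOrder β] (u v : β → ℝ)
    (hsum : ∑ b, u b = ∑ b, v b) (hdom : StochDom u v)
    (f : β → ℝ) (hf : Antitone f) :
    ∑ b, u b * f b ≤ ∑ b, v b * f b := by
  have := exp_mono u v hsum hdom (fun b => -(f b)) (fun x y hxy => neg_le_neg (hf hxy))
  simp only [mul_neg, Finset.sum_neg_distrib] at this
  linarith

lemma dom_comp_mono {β γ : Type*} [Fintype β] [Fintype γ] [PartialOrder β] [PartialOrder γ]
    (u v : β → ℝ) (hsum : ∑ b, u b = ∑ b, v b) (hdom : StochDom u v)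
    (K : β → γ → ℝ) (hK : ∀ b b' : β, b' ≤ b → StochDom (K b) (K b')) :
    StochDom (fun c => ∑ b, u b * K b c) (fun c => ∑ b, v b * K b c) := by
  intro A hA
  have swap : ∀ w : β → ℝ, ∑ c ∈ A, ∑ b, w b * K b c = ∑ b, w b * (∑ c ∈ A, K b c) := by
    intro w
    rw [Finset.sum_comm]
    exact Finset.sum_congr rfl fun b _ => (Finset.mul_sum _ _ _).symm
  rw [swap, swap]
  exact exp_mono u v hsum hdom _ (fun b' b hb => hK b b' hb A hA)

lemma dom_comp_anti {β γ : Type*} [Fintype β] [Fintype γ] [PartialOrder β] [PartialOrder γ]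
    (u v : β → ℝ) (hsum : ∑ b, u b = ∑ b, v b) (hdom : StochDom u v)
    (K : β → γ → ℝ) (hK : ∀ b b' : β, b' ≤ b → StochDom (K b') (K b)) :
    StochDom (fun c => ∑ b, v b * K b c) (fun c => ∑ b, u b * K b c) := by
  intro A hA
  have swap : ∀ w : β → ℝ, ∑ c ∈ A, ∑ b, w b * K b c = ∑ b, w b * (∑ c ∈ A, K b c) := by
    intro w
    rw [Finset.sum_comm]
    exact Finset.sum_congr rfl fun b _ => (Finset.mul_sum _ _ _).symm
  rw [swap, swap]
  exact exp_anti u v hsum hdom _ (fun b' b hb => hK b b' hb A hA)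

section CondLaw

variable {n : ℕ} {α : Fin (n+1) → Type*} [∀ i, Fintype (α i)] [∀ i, DecidableEq (α i)]
  (p : (∀ i, α i) → ℝ)

lemma sum_marg2 (i j : Fin (n+1)) (a : α i) :
    ∑ b, marg2 p i j a b = marg p i a := by
  unfold marg2 marg
  rw [← Finset.sum_fiberwise (univ.filter (fun ω => ω i = a)) (fun ω => ω j) p]
  apply Finset.sum_congr rfl
  intro b _
  rw [Finset.filter_filter]

lemma sum_condLaw (i j : Fin (n+1)) (a : α i) (h : 0 < marg p i a) :
    ∑ b, condLaw p i j a b = 1 := by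
  unfold condLaw
  rw [← Finset.sum_div, sum_marg2, div_self (ne_of_gt h)]

lemma condLaw_dirac (i : Fin (n+1)) (a b : α i) (h : 0 < marg p i a) :
    condLaw p i i a b = if b = a then 1 else 0 := by
  unfold condLaw marg2
  by_cases hba : b = a
  · rw [if_pos hba]
    have hfe : univ.filter (fun ω : ∀ i, α i => ω i = a ∧ ω i = b)
        = univ.filter (fun ω => ω i = a) := by
      apply Finset.filter_congr; intro ω _; simp [hba]
    rw [hfe]
    exact div_self (ne_of_gt h)
  · rw [if_neg hba]
    have : univ.filter (fun ω : ∀ i, α i => ω i = a ∧ ω i = b) = ∅ := by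
      apply Finset.filter_eq_empty_iff.mpr
      rintro ω - ⟨h1, h2⟩
      exact hba (h2 ▸ h1 ▸ rfl)
    rw [this]
    simp

lemma markov3
    (hmarkov : ∀ (k : Fin (n+1)), 0 < (k : ℕ) → (k : ℕ) < n → ∀ ω,
      p ω * marg p k (ω k)
        = (∑ ω' ∈ univ.filter (fun ω' => ∀ i, i ≤ k → ω' i = ω i), p ω')
          * (∑ ω' ∈ univ.filter (fun ω' => ∀ i, k ≤ i → ω' i = ω i), p ω'))
    (i0 k k' : Fin (n+1)) (hi0 : (i0 : ℕ) = 0) (hk' : (k' : ℕ) = (k : ℕ) + 1)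
    (h0 : 0 < (k : ℕ)) (hn : (k : ℕ) < n) (a : α i0) (c : α k) (b : α k') :
    (∑ ω ∈ univ.filter (fun ω => ω i0 = a ∧ ω k = c ∧ ω k' = b), p ω) * marg p k c
      = marg2 p i0 k a c * marg2 p k k' c b := by
  classical
  have hi0k : i0 ≤ k := by rw [Fin.le_def]; omega
  have hkk' : k ≤ k' := by rw [Fin.le_def]; omega
  set S := univ.filter (fun ω : ∀ i, α i => ω i0 = a ∧ ω k = c ∧ ω k' = b) with hS
  have hmem : ∀ ω ∈ S, ω i0 = a ∧ ω k = c ∧ ω k' = b := by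
    intro ω hω; simpa [hS] using hω
  have step1 : (∑ ω ∈ S, p ω) * marg p k c
      = ∑ ω ∈ S, (∑ x ∈ univ.filter (fun x => ∀ i, i ≤ k → x i = ω i), p x)
          * (∑ y ∈ univ.filter (fun y => ∀ i, k ≤ i → y i = ω i), p y) := by
    rw [Finset.sum_mul]
    apply Finset.sum_congr rfl
    intro ω hω
    rw [show marg p k c = marg p k (ω k) from by rw [(hmem ω hω).2.1]]
    exact hmarkov k h0 hn ω
  rw [step1]
  have step2 : ∀ ω : ∀ i, α i,
      (∑ x ∈ univ.filter (fun x => ∀ i, i ≤ k → x i = ω i), p x)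
        * (∑ y ∈ univ.filter (fun y => ∀ i, k ≤ i → y i = ω i), p y)
      = ∑ x : ∀ i, α i, ∑ y : ∀ i, α i,
          (if ∀ i, i ≤ k → x i = ω i then p x else 0)
            * (if ∀ i, k ≤ i → y i = ω i then p y else 0) := by
    intro ω
    rw [Finset.sum_filter, Finset.sum_filter, Finset.sum_mul_sum]
  rw [Finset.sum_congr rfl (fun ω _ => step2 ω)]
  rw [Finset.sum_comm]
  rw [Finset.sum_congr rfl (fun x _ => Finset.sum_comm)]
  have inner : ∀ x y : ∀ i, α i,
      ∑ ω ∈ S, (if ∀ i, i ≤ k → x i = ω i then p x else 0)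
          * (if ∀ i, k ≤ i → y i = ω i then p y else 0)
      = (if x i0 = a ∧ x k = c then p x else 0) * (if y k = c ∧ y k' = b then p y else 0) := by
    intro x y
    by_cases hx : x i0 = a ∧ x k = c
    · by_cases hy : y k = c ∧ y k' = b
      · rw [if_pos hx, if_pos hy]
        set g : ∀ i, α i := fun i => if h : i ≤ k then x i else y i with hg
        have hgx : ∀ i, i ≤ k → g i = x i := by
          intro i hi
          show (if h : i ≤ k then x i else y i) = x i
          rw [dif_pos hi]
        have hgy : ∀ i, k ≤ i → g i = y i := by
          intro i hi
          rcases le_or_gt i k with h' | h'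
          · have hik : i = k := le_antisymm h' hi
            have hgi : g i = x i := hgx i h'
            rw [hgi]
            subst hik
            rw [hx.2, hy.1]
          · show (if h : i ≤ k then x i else y i) = y i
            rw [dif_neg (not_le.mpr h')]
        have hmemg : g ∈ S := by
          rw [hS, Finset.mem_filter]
          refine ⟨Finset.mem_univ _, ?_, ?_, ?_⟩
          · rw [hgx i0 hi0k, hx.1]
          · rw [hgx k le_rfl, hx.2]
          · rw [hgy k' hkk', hy.2]
        have hother : ∀ ω ∈ S, ω ≠ g →
            (if ∀ i, i ≤ k → x i = ω i then p x else 0)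
              * (if ∀ i, k ≤ i → y i = ω i then p y else 0) = 0 := by
          intro ω hω hne
          by_cases hC1 : ∀ i, i ≤ k → x i = ω i
          · by_cases hC2 : ∀ i, k ≤ i → y i = ω i
            · exfalso
              apply hne
              funext i
              rcases le_or_gt i k with h' | h'
              · rw [← hC1 i h', hgx i h']
              · rw [← hC2 i (le_of_lt h'), hgy i (le_of_lt h')]
            · rw [if_neg hC2, mul_zero]
          · rw [if_neg hC1, zero_mul]
        rw [Finset.sum_eq_single_of_mem g hmemg hother,
          if_pos (fun i hi => (hgx i hi).symm), if_pos (fun i hi => (hgy i hi).symm)]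
      · rw [if_neg hy, mul_zero]
        apply Finset.sum_eq_zero
        intro ω hω
        by_cases hC1 : ∀ i, i ≤ k → x i = ω i
        · by_cases hC2 : ∀ i, k ≤ i → y i = ω i
          · exfalso
            apply hy
            obtain ⟨-, h2, h3⟩ := hmem ω hω
            exact ⟨(hC2 k le_rfl).trans h2, (hC2 k' hkk').trans h3⟩
          · rw [if_neg hC2, mul_zero]
        · rw [if_neg hC1, zero_mul]
    · rw [if_neg hx, zero_mul]
      apply Finset.sum_eq_zero
      intro ω hω
      by_cases hC1 : ∀ i, i ≤ k → x i = ω i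
      · exfalso
        apply hx
        obtain ⟨h1, h2, -⟩ := hmem ω hω
        exact ⟨(hC1 i0 hi0k).trans h1, (hC1 k le_rfl).trans h2⟩
      · rw [if_neg hC1, zero_mul]
  rw [Finset.sum_congr rfl (fun x _ => Finset.sum_congr rfl (fun y _ => inner x y))]
  rw [← Finset.sum_mul_sum, ← Finset.sum_filter, ← Finset.sum_filter]
  rfl

lemma chainStep (hpos : ∀ (i : Fin (n+1)) (a : α i), 0 < marg p i a)
    (hmarkov : ∀ (k : Fin (n+1)), 0 < (k : ℕ) → (k : ℕ) < n → ∀ ω,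
      p ω * marg p k (ω k)
        = (∑ ω' ∈ univ.filter (fun ω' => ∀ i, i ≤ k → ω' i = ω i), p ω')
          * (∑ ω' ∈ univ.filter (fun ω' => ∀ i, k ≤ i → ω' i = ω i), p ω'))
    (i0 kf k'f : Fin (n+1)) (hi0 : (i0 : ℕ) = 0) (hk' : (k'f : ℕ) = (kf : ℕ) + 1)
    (hn : (kf : ℕ) < n) (a : α i0) (b : α k'f) :
    condLaw p i0 k'f a b = ∑ c, condLaw p i0 kf a c * condLaw p kf k'f c b := by
  classical
  rcases Nat.eq_zero_or_pos (kf : ℕ) with h0 | h0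
  · have hik : i0 = kf := Fin.ext (by omega)
    subst hik
    symm
    have hD : ∀ c, condLaw p i0 i0 a c * condLaw p i0 k'f c b
        = if c = a then condLaw p i0 k'f c b else 0 := by
      intro c
      rw [condLaw_dirac p i0 a c (hpos i0 a)]
      split <;> simp
    rw [Finset.sum_congr rfl (fun c _ => hD c), Finset.sum_ite_eq' univ a]
    simp
  · have hm0 : marg p i0 a ≠ 0 := ne_of_gt (hpos _ _)
    have key : ∀ c, (∑ ω ∈ univ.filter (fun ω => ω i0 = a ∧ ω kf = c ∧ ω k'f = b), p ω)
        = marg2 p i0 kf a c * marg2 p kf k'f c b / marg p kf c := by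
      intro c
      rw [eq_div_iff (ne_of_gt (hpos kf c))]
      exact markov3 p hmarkov i0 kf k'f hi0 hk' h0 hn a c b
    have fib : marg2 p i0 k'f a b
        = ∑ c, ∑ ω ∈ univ.filter (fun ω => ω i0 = a ∧ ω kf = c ∧ ω k'f = b), p ω := by
      unfold marg2
      rw [← Finset.sum_fiberwise (univ.filter (fun ω => ω i0 = a ∧ ω k'f = b))
        (fun ω => ω kf) p]
      apply Finset.sum_congr rfl
      intro c _
      rw [Finset.filter_filter]
      apply Finset.sum_congr _ (fun _ _ => rfl)
      apply Finset.filter_congr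
      intro ω _
      constructor
      · rintro ⟨⟨h1, h2⟩, h3⟩; exact ⟨h1, h3, h2⟩
      · rintro ⟨h1, h2, h3⟩; exact ⟨⟨h1, h3⟩, h2⟩
    unfold condLaw
    rw [fib, Finset.sum_congr rfl (fun c _ => key c), Finset.sum_div]
    apply Finset.sum_congr rfl
    intro c _
    rw [div_div, div_mul_div_comm]
    ring_nf

end CondLaw

theorem stmt_1 (n : ℕ) (α : Fin (n+1) → Type*)
    [∀ i, Fintype (α i)] [∀ i, DecidableEq (α i)] [∀ i, PartialOrder (α i)]
    (p : (∀ i, α i) → ℝ) (hnn : ∀ ω, 0 ≤ p ω) (hsum : ∑ ω, p ω = 1)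
    (hpos : ∀ (i : Fin (n+1)) (a : α i), 0 < marg p i a)
    (hmarkov : ∀ (k : Fin (n+1)), 0 < (k : ℕ) → (k : ℕ) < n → ∀ ω,
      p ω * marg p k (ω k)
        = (∑ ω' ∈ univ.filter (fun ω' => ∀ i, i ≤ k → ω' i = ω i), p ω')
          * (∑ ω' ∈ univ.filter (fun ω' => ∀ i, k ≤ i → ω' i = ω i), p ω'))
    (d : Fin n → Bool)
    (hstep : ∀ (k : Fin n) (a a' : α k.castSucc), a' ≤ a →
      (d k = false →
        StochDom (condLaw p k.castSucc k.succ a) (condLaw p k.castSucc k.succ a')) ∧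
      (d k = true →
        StochDom (condLaw p k.castSucc k.succ a') (condLaw p k.castSucc k.succ a))) :
    (Even (univ.filter (fun k => d k = true)).card →
      ∀ a a' : α 0, a' ≤ a →
        StochDom (condLaw p 0 (Fin.last n) a) (condLaw p 0 (Fin.last n) a')) ∧
    (¬ Even (univ.filter (fun k => d k = true)).card →
      ∀ a a' : α 0, a' ≤ a →
        StochDom (condLaw p 0 (Fin.last n) a') (condLaw p 0 (Fin.last n) a)) := by
  classical
  have main : ∀ (k : ℕ) (hk : k ≤ n) (a a' : α (0 : Fin (n+1))), a' ≤ a →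
      (Even ((univ.filter (fun j : Fin n => (j : ℕ) < k ∧ d j = true)).card) →
        StochDom (condLaw p 0 (⟨k, by omega⟩ : Fin (n+1)) a)
          (condLaw p 0 (⟨k, by omega⟩ : Fin (n+1)) a')) ∧
      (¬ Even ((univ.filter (fun j : Fin n => (j : ℕ) < k ∧ d j = true)).card) →
        StochDom (condLaw p 0 (⟨k, by omega⟩ : Fin (n+1)) a')
          (condLaw p 0 (⟨k, by omega⟩ : Fin (n+1)) a)) := by
    intro k
    induction k with
    | zero =>
      intro hk a a' haa
      have hc : (univ.filter (fun j : Fin n => (j : ℕ) < 0 ∧ d j = true)).card = 0 := by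
        simp
      have hdom : StochDom (condLaw p 0 (0 : Fin (n+1)) a)
          (condLaw p 0 (0 : Fin (n+1)) a') := by
        intro A hA
        have hval : ∀ (aa : α (0 : Fin (n+1))) (x : α (0 : Fin (n+1))),
            condLaw p 0 (0 : Fin (n+1)) aa x = if x = aa then 1 else 0 :=
          fun aa x => condLaw_dirac p 0 aa x (hpos 0 aa)
        rw [Finset.sum_congr rfl (fun x _ => hval a x),
          Finset.sum_congr rfl (fun x _ => hval a' x),
          Finset.sum_ite_eq' A a, Finset.sum_ite_eq' A a']
        by_cases hA' : a' ∈ A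
        · rw [if_pos hA', if_pos (hA a' hA' a haa)]
        · rw [if_neg hA']
          split <;> norm_num
      rw [hc]
      exact ⟨fun _ => hdom, fun h => absurd Even.zero h⟩
    | succ k ih =>
      intro hk a a' haa
      have hkn : k < n := by omega
      set jk : Fin n := ⟨k, hkn⟩ with hjk
      have hjkv : (jk : ℕ) = k := rfl
      have hfun : ∀ aa : α (0 : Fin (n+1)),
          condLaw p 0 (⟨k+1, by omega⟩ : Fin (n+1)) aa
            = fun b : α (⟨k+1, by omega⟩ : Fin (n+1)) =>
                ∑ c : α (⟨k, by omega⟩ : Fin (n+1)), condLaw p 0 (⟨k, by omega⟩ : Fin (n+1)) aa c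
                * condLaw p (⟨k, by omega⟩ : Fin (n+1)) (⟨k+1, by omega⟩ : Fin (n+1)) c b :=
        fun aa => funext fun b =>
          chainStep p hpos hmarkov 0 ⟨k, by omega⟩ ⟨k+1, by omega⟩ rfl rfl hkn aa b
      have hcard : (univ.filter (fun j : Fin n => (j : ℕ) < k+1 ∧ d j = true)).card
          = (univ.filter (fun j : Fin n => (j : ℕ) < k ∧ d j = true)).card
            + (if d jk = true then 1 else 0) := by
        have hun : univ.filter (fun j : Fin n => (j : ℕ) < k+1 ∧ d j = true)
            = (univ.filter (fun j : Fin n => (j : ℕ) < k ∧ d j = true))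
              ∪ (univ.filter (fun j : Fin n => j = jk ∧ d j = true)) := by
          ext j
          simp only [Finset.mem_union, Finset.mem_filter, Finset.mem_univ, true_and,
            Fin.ext_iff, hjkv]
          by_cases hdj : d j = true
          · simp only [hdj, and_true]
            omega
          · simp [hdj]
        rw [hun, Finset.card_union_of_disjoint]
        · congr 1
          by_cases hdk : d jk = true
          · rw [if_pos hdk]
            rw [show univ.filter (fun j : Fin n => j = jk ∧ d j = true) = {jk} from by
              ext j
              simp only [Finset.mem_filter, Finset.mem_univ, true_and, Finset.mem_singleton]
              constructor
              · rintro ⟨h1, -⟩; exact h1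
              · rintro rfl; exact ⟨rfl, hdk⟩]
            rfl
          · rw [if_neg hdk]
            rw [show univ.filter (fun j : Fin n => j = jk ∧ d j = true) = ∅ from by
              apply Finset.filter_eq_empty_iff.mpr
              rintro j - ⟨rfl, h2⟩
              exact hdk h2]
            rfl
        · rw [Finset.disjoint_left]
          rintro j hj1 hj2
          simp only [Finset.mem_filter, Finset.mem_univ, true_and] at hj1 hj2
          rw [hj2.1] at hj1
          omega
      obtain ⟨ihE, ihO⟩ := ih (by omega) a a' haa
      have hsum1 : ∑ c, condLaw p 0 (⟨k, by omega⟩ : Fin (n+1)) a c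
          = ∑ c, condLaw p 0 (⟨k, by omega⟩ : Fin (n+1)) a' c := by
        rw [sum_condLaw p _ _ a (hpos _ _), sum_condLaw p _ _ a' (hpos _ _)]
      constructor
      · intro hE'
        rw [hfun a, hfun a']
        by_cases hdk : d jk = true
        · have hOdd : ¬ Even ((univ.filter (fun j : Fin n => (j : ℕ) < k ∧ d j = true)).card) := by
            rw [hcard, if_pos hdk, Nat.even_add_one] at hE'
            exact fun h => hE' h
          exact dom_comp_anti _ _ hsum1.symm (ihO hOdd) _
            (fun c c' hcc => (hstep jk c c' hcc).2 hdk)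
        · have hEv : Even ((univ.filter (fun j : Fin n => (j : ℕ) < k ∧ d j = true)).card) := by
            rwa [hcard, if_neg hdk, add_zero] at hE'
          exact dom_comp_mono _ _ hsum1 (ihE hEv) _
            (fun c c' hcc => (hstep jk c c' hcc).1 ((Bool.not_eq_true _).mp hdk))
      · intro hO'
        rw [hfun a, hfun a']
        by_cases hdk : d jk = true
        · have hEv : Even ((univ.filter (fun j : Fin n => (j : ℕ) < k ∧ d j = true)).card) := by
            rw [hcard, if_pos hdk, Nat.even_add_one] at hO'
            exact not_not.mp hO'
          exact dom_comp_anti _ _ hsum1 (ihE hEv) _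
            (fun c c' hcc => (hstep jk c c' hcc).2 hdk)
        · have hOdd : ¬ Even ((univ.filter (fun j : Fin n => (j : ℕ) < k ∧ d j = true)).card) := by
            rwa [hcard, if_neg hdk, add_zero] at hO'
          exact dom_comp_mono _ _ hsum1.symm (ihO hOdd) _
            (fun c c' hcc => (hstep jk c c' hcc).1 ((Bool.not_eq_true _).mp hdk))
  have hfe : univ.filter (fun j : Fin n => (j : ℕ) < n ∧ d j = true)
      = univ.filter (fun j : Fin n => d j = true) := by
    apply Finset.filter_congr
    intro j _
    simp [j.isLt]
  constructor
  · intro hEv a a' haa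
    exact (main n le_rfl a a' haa).1 (by rwa [hfe])
  · intro hOd a a' haa
    exact (main n le_rfl a a' haa).2 (by rwa [hfe])
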